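/- For n ≥ 2, the maximum number of 2-cycles η_n over SDS maps [K_n, f, id] with f : 𝔽₂ⁿ → 𝔽₂ equals the maximum size of a set S ⊆ 𝔽₂^{n−1} such that for all distinct u, v ∈ S, u + v contains 101 as a subsequence. -/

import Mathlib

/-- The SDS map over the complete graph `K n` with identity update order and
common vertex function `f`: vertices `0, 1, …, n-1` are updated in order,
each update replacing that coordinate with `f` of the current system state. -/
def sdsMap {n : ℕ} (f : (Fin n → ZMod 2) → ZMod 2) (x : Fin n → ZMod 2) :
    Fin n → ZMod 2 :=
  (List.finRange n).foldl (fun v i => Function.update v i (f v)) x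

/-- `z` contains `101` as a subsequence. -/
def contains101 {n : ℕ} (z : Fin n → ZMod 2) : Prop :=
  ∃ i j k : Fin n, i < j ∧ j < k ∧ z i = 1 ∧ z j = 0 ∧ z k = 1

/-- `z` contains `111` as a subsequence. -/
def contains111 {n : ℕ} (z : Fin n → ZMod 2) : Prop :=
  ∃ i j k : Fin n, i < j ∧ j < k ∧ z i = 1 ∧ z j = 1 ∧ z k = 1

/-- The number of 2-cycles in the phase space of `sdsMap f`. -/
noncomputable def numTwoCycles {n : ℕ} (f : (Fin n → ZMod 2) → ZMod 2) : ℕ :=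
  Set.ncard {p : Sym2 (Fin n → ZMod 2) |
    ∃ x y, p = s(x, y) ∧ x ≠ y ∧ sdsMap f x = y ∧ sdsMap f y = x}


namespace Stmt15


abbrev Vv (N : ℕ) := Fin N → ZMod 2

def mixv {N : ℕ} (x y : Vv N) (m : ℕ) : Vv N := fun k => if (k:ℕ) < m then y k else x k

lemma mixv_zero {N} (x y : Vv N) : mixv x y 0 = x := by
  funext k; simp [mixv]

lemma mixv_top {N} (x y : Vv N) : mixv x y N = y := by
  funext k; simp [mixv, k.isLt]

lemma foldl_untouched {N} (f : Vv N → ZMod 2) (l : List (Fin N)) (i : Fin N)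
    (h : ∀ j ∈ l, j ≠ i) (z : Vv N) :
    (l.foldl (fun v j => Function.update v j (f v)) z) i = z i := by
  induction l generalizing z with
  | nil => rfl
  | cons a t ih =>
    simp only [List.foldl_cons]
    rw [ih (fun j hj => h j (List.mem_cons_of_mem _ hj))]
    exact Function.update_of_ne (Ne.symm (h a List.mem_cons_self)) _ _

lemma foldl_take {N} (f : Vv N → ZMod 2) (x y : Vv N) (m : ℕ) (hm : m ≤ N)
    (hc : ∀ i : Fin N, (i:ℕ) < m → f (mixv x y i) = y i) :
    ((List.finRange N).take m).foldl (fun v i => Function.update v i (f v)) x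
      = mixv x y m := by
  induction m with
  | zero => simp [mixv_zero]
  | succ m ih =>
    have hmN : m < N := hm
    have hgl : m < (List.finRange N).length := by simp [hmN]
    rw [List.take_succ, List.getElem?_eq_getElem hgl]
    simp only [List.getElem_finRange, Option.toList_some, Fin.cast_mk]
    rw [List.foldl_append, ih (le_of_lt hmN) (fun i hi => hc i (Nat.lt_succ_of_lt hi))]
    simp only [List.foldl_cons, List.foldl_nil]
    have hv : f (mixv x y m) = y ⟨m, hmN⟩ := by
      have := hc ⟨m, hmN⟩ (Nat.lt_succ_self m)
      simpa using this
    rw [hv]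
    funext k
    rcases eq_or_ne k (⟨m, hmN⟩ : Fin N) with rfl | hk
    · simp [Function.update_self, mixv]
    · rw [Function.update_of_ne hk]
      have : (k:ℕ) ≠ m := fun h => hk (Fin.ext (by simpa [Fin.cast] using h))
      simp only [mixv]
      by_cases h2 : (k:ℕ) < m
      · simp [h2, Nat.lt_succ_of_lt h2]
      · have : ¬ (k:ℕ) < m + 1 := by omega
        simp [h2, this]

lemma sds_iff {N} (f : Vv N → ZMod 2) (x y : Vv N) :
    sdsMap f x = y ↔ ∀ i : Fin N, f (mixv x y i) = y i := by
  constructor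
  · intro hxy
    have key : ∀ m : ℕ, ∀ i : Fin N, (i:ℕ) < m → f (mixv x y i) = y i := by
      intro m
      induction m with
      | zero => intro i hi; omega
      | succ m ih =>
        intro i hi
        rcases Nat.lt_or_ge (i:ℕ) m with h | h
        · exact ih i h
        · have him : (i:ℕ) = m := by omega
          have hmN : m < N := him ▸ i.isLt
          have hpart := foldl_take f x y m (le_of_lt hmN) ih
          have hgl : m < (List.finRange N).length := by simp [hmN]
          have hdrop : (List.finRange N).drop m
              = (⟨m, hmN⟩ : Fin N) :: (List.finRange N).drop (m+1) := by
            rw [List.drop_eq_getElem_cons hgl, List.getElem_finRange]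
            rfl
          have hy : y i = (sdsMap f x) i := hxy ▸ rfl
          rw [hy]
          unfold sdsMap
          rw [← List.take_append_drop m (List.finRange N), List.foldl_append, hpart, hdrop]
          simp only [List.foldl_cons]
          rw [foldl_untouched]
          · have : Function.update (mixv x y m) ⟨m, hmN⟩ (f (mixv x y m)) i
                = f (mixv x y m) := by
              have : i = (⟨m, hmN⟩ : Fin N) := Fin.ext him
              rw [this, Function.update_self]
            rw [this]
            congr 1
            simp [mixv, him]
          · intro j hj
            rw [List.mem_iff_getElem] at hj
            obtain ⟨t, ht, hjt⟩ := hj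
            rw [List.getElem_drop, List.getElem_finRange] at hjt
            intro hji
            have : (j:ℕ) = m + 1 + t := by rw [← hjt]; rfl
            omega
    intro i; exact key N i i.isLt
  · intro hc
    have := foldl_take f x y N (le_refl N) (fun i hi => hc i)
    rw [List.take_of_length_le (by simp)] at this  -- maybe name differs
    unfold sdsMap
    rw [this, mixv_top]


def cpl {N : ℕ} (x : Vv N) : Vv N := fun k => x k + 1

lemma zmod2_eq_or (a b : ZMod 2) : a = b ∨ a = b + 1 := by revert a b; decide
lemma zmod2_ne_iff {a b : ZMod 2} : a ≠ b ↔ a = b + 1 := by revert a b; decide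

lemma mix_succ_eq {N} {x y : Vv N} {i : Fin N} (h : x i = y i) :
    mixv x y ((i:ℕ)+1) = mixv x y (i:ℕ) := by
  funext k
  simp only [mixv]
  rcases lt_trichotomy (k:ℕ) (i:ℕ) with hk | hk | hk
  · simp [hk, Nat.lt_succ_of_lt hk]
  · have : k = i := Fin.ext hk
    subst this
    simp [Nat.lt_succ_self, h]
  · have h1 : ¬ (k:ℕ) < (i:ℕ) := by omega
    have h2 : ¬ (k:ℕ) < (i:ℕ)+1 := by omega
    simp [h1, h2]

lemma complement_of {N} {f : Vv N → ZMod 2} {x y : Vv N}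
    (h1 : ∀ i : Fin N, f (mixv x y (i:ℕ)) = y i)
    (h2 : ∀ i : Fin N, f (mixv y x (i:ℕ)) = x i)
    (hne : x ≠ y) : y = cpl x := by
  -- step: equality propagates one step up
  have step : ∀ i : Fin N, ∀ h : (i:ℕ)+1 < N, x i = y i →
      x ⟨(i:ℕ)+1, h⟩ = y ⟨(i:ℕ)+1, h⟩ := by
    intro i h hxy
    have hy : y ⟨(i:ℕ)+1, h⟩ = y i := by
      have e1 := h1 ⟨(i:ℕ)+1, h⟩
      have e2 := h1 i
      rw [show ((⟨(i:ℕ)+1, h⟩ : Fin N) : ℕ) = (i:ℕ)+1 from rfl, mix_succ_eq hxy] at e1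
      rw [← e1, ← e2]
    have hx : x ⟨(i:ℕ)+1, h⟩ = x i := by
      have e1 := h2 ⟨(i:ℕ)+1, h⟩
      have e2 := h2 i
      rw [show ((⟨(i:ℕ)+1, h⟩ : Fin N) : ℕ) = (i:ℕ)+1 from rfl,
        mix_succ_eq hxy.symm] at e1
      rw [← e1, ← e2]
    rw [hx, hy, hxy]
  have up : ∀ t : ℕ, ∀ i : Fin N, x i = y i → ∀ h : (i:ℕ)+t < N,
      x ⟨(i:ℕ)+t, h⟩ = y ⟨(i:ℕ)+t, h⟩ := by
    intro t
    induction t with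
    | zero => intro i hxy h; simpa using hxy
    | succ t ih =>
      intro i hxy h
      have h' : (i:ℕ)+t < N := by omega
      have := step ⟨(i:ℕ)+t, h'⟩ (by omega) (ih i hxy h')
      convert this using 2 <;> exact Fin.ext (by simp only [Fin.val_mk] <;> omega)
  -- if any coordinate agrees, x = y
  have main : ∀ i : Fin N, x i = y i → x = y := by
    intro i hxy
    have hN : 0 < N := Nat.pos_of_ne_zero (by rintro rfl; exact absurd i.isLt (by omega))
    set L : Fin N := ⟨N-1, by omega⟩ with hL
    set Z : Fin N := ⟨0, hN⟩ with hZ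
    have hLeq : x L = y L := by
      have h' : (i:ℕ) + (N-1-(i:ℕ)) < N := by omega
      have heq : (⟨(i:ℕ)+(N-1-(i:ℕ)), h'⟩ : Fin N) = L := by
        apply Fin.ext; simp only [hL]; omega
      rw [← heq]; exact up _ i hxy h'
    have hmix1 : mixv x y (N-1) = y := by
      funext k
      simp only [mixv]
      by_cases hk : (k:ℕ) < N-1
      · simp [hk]
      · have : k = L := by apply Fin.ext; simp only [hL]; omega
        subst this
        simp [hLeq]
    have hmix2 : mixv y x (N-1) = x := by
      funext k
      simp only [mixv]
      by_cases hk : (k:ℕ) < N-1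
      · simp [hk]
      · have : k = L := by apply Fin.ext; simp only [hL]; omega
        subst this
        simp [← hLeq]
    have hmix3 : mixv y x 0 = y := by funext k; simp [mixv]
    have hmix4 : mixv x y 0 = x := by funext k; simp [mixv]
    have e1 : f y = y L := by have := h1 L; rwa [show ((L:Fin N):ℕ) = N-1 from rfl, hmix1] at this
    have e2 : f y = x Z := by have := h2 Z; rwa [show ((Z:Fin N):ℕ) = 0 from rfl, hmix3] at this
    have e3 : f x = x L := by have := h2 L; rwa [show ((L:Fin N):ℕ) = N-1 from rfl, hmix2] at this
    have e4 : f x = y Z := by have := h1 Z; rwa [show ((Z:Fin N):ℕ) = 0 from rfl, hmix4] at this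
    have hZeq : x Z = y Z := by
      calc x Z = f y := e2.symm
        _ = y L := e1
        _ = x L := hLeq.symm
        _ = f x := e3.symm
        _ = y Z := e4
    funext k
    have h' : (Z:ℕ) + (k:ℕ) < N := by have := k.isLt; show 0 + (k:ℕ) < N; omega
    have := up (k:ℕ) Z hZeq h'
    convert this using 2 <;> (apply Fin.ext; simp [hZ])
  refine funext fun k => ?_
  have : x k ≠ y k := fun h => hne (main k h)
  have := zmod2_ne_iff.mp (Ne.symm this)
  simpa [cpl] using this

def ee (N m : ℕ) : Vv N := fun k => if (k:ℕ) < m then 1 else 0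
def Good {N : ℕ} (f : Vv N → ZMod 2) (x : Vv N) : Prop :=
  ∀ i : Fin N, f (x + ee N (i:ℕ)) = x i + 1 ∧ f (cpl x + ee N (i:ℕ)) = x i

lemma z2_aa : ∀ a : ZMod 2, a + 1 + 1 = a := by decide
lemma z2_zero_ne_one : (0 : ZMod 2) ≠ 1 := by decide
lemma z2_ne_add_one : ∀ a : ZMod 2, a ≠ a + 1 := by decide

lemma cpl_cpl {N} (x : Vv N) : cpl (cpl x) = x := by
  funext k; simp [cpl, z2_aa]

lemma mixv_cpl {N} (x : Vv N) (m : ℕ) : mixv x (cpl x) m = x + ee N m := by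
  funext k
  by_cases h : (k:ℕ) < m <;> simp [mixv, cpl, ee, h, Pi.add_apply]

lemma mixv_cpl' {N} (x : Vv N) (m : ℕ) : mixv (cpl x) x m = cpl x + ee N m := by
  funext k
  by_cases h : (k:ℕ) < m <;> simp [mixv, cpl, ee, h, Pi.add_apply, z2_aa]

lemma Good_cpl {N} {f : Vv N → ZMod 2} {x : Vv N} (h : Good f x) : Good f (cpl x) := by
  intro i
  refine ⟨?_, ?_⟩
  · have := (h i).2
    simpa [cpl, z2_aa] using this
  · have := (h i).1
    rw [cpl_cpl]
    simpa [cpl, z2_aa] using this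

lemma cycle_iff {N : ℕ} [NeZero N] (f : Vv N → ZMod 2) (x y : Vv N) :
    (x ≠ y ∧ sdsMap f x = y ∧ sdsMap f y = x) ↔ (y = cpl x ∧ Good f x) := by
  constructor
  · rintro ⟨hne, hxy, hyx⟩
    have h1 := (sds_iff f x y).mp hxy
    have h2 := (sds_iff f y x).mp hyx
    have hy : y = cpl x := complement_of h1 h2 hne
    subst hy
    refine ⟨rfl, fun i => ?_⟩
    constructor
    · have := h1 i; rw [mixv_cpl] at this; simpa [cpl] using this
    · have := h2 i; rw [mixv_cpl'] at this; exact this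
  · rintro ⟨rfl, hg⟩
    refine ⟨?_, ?_, ?_⟩
    · intro h
      have := congrFun h 0
      exact z2_ne_add_one _ this
    · rw [sds_iff]
      intro i
      rw [mixv_cpl]
      have := (hg i).1
      simpa [cpl] using this
    · rw [sds_iff]
      intro i
      rw [mixv_cpl']
      exact (hg i).2

def Af {N : ℕ} [NeZero N] (f : Vv N → ZMod 2) : Set (Vv N) :=
  {x | x 0 = 0 ∧ Good f x}

lemma twoCycleSet_eq {N : ℕ} [NeZero N] (f : Vv N → ZMod 2) :
    {p : Sym2 (Vv N) | ∃ x y, p = s(x, y) ∧ x ≠ y ∧ sdsMap f x = y ∧ sdsMap f y = x}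
      = (fun x => s(x, cpl x)) '' Af f := by
  ext p
  constructor
  · rintro ⟨x, y, rfl, hne, hxy, hyx⟩
    have h := (cycle_iff f x y).mp ⟨hne, hxy, hyx⟩
    obtain ⟨rfl, hg⟩ := h
    rcases zmod2_eq_or (x 0) 0 with h0 | h0
    · exact ⟨x, ⟨h0, hg⟩, rfl⟩
    · refine ⟨cpl x, ⟨by simp [cpl, h0, z2_aa]; exact (by decide : (0:ZMod 2)+1+1 = 0), Good_cpl hg⟩, ?_⟩
      show s(cpl x, cpl (cpl x)) = s(x, cpl x)
      rw [cpl_cpl]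
      exact Sym2.eq_swap
  · rintro ⟨x, ⟨h0, hg⟩, rfl⟩
    exact ⟨x, cpl x, rfl, ((cycle_iff f x (cpl x)).mpr ⟨rfl, hg⟩).1,
      ((cycle_iff f x (cpl x)).mpr ⟨rfl, hg⟩).2⟩

lemma numTwoCycles_eq_ncard_Af {N : ℕ} [NeZero N] (f : Vv N → ZMod 2) :
    numTwoCycles f = (Af f).ncard := by
  unfold numTwoCycles
  rw [twoCycleSet_eq]
  apply Set.ncard_image_of_injOn
  intro a ha b hb hab
  rcases Sym2.eq_iff.mp hab with ⟨h, _⟩ | ⟨h1, h2⟩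
  · exact h
  · exfalso
    have : a 0 = b 0 + 1 := by rw [h1]; rfl
    rw [ha.1, hb.1] at this
    exact z2_zero_ne_one this

def tailv {n : ℕ} (x : Vv (n+1)) : Vv n := fun k => x k.succ

def liftv {n : ℕ} (u : Vv n) : Vv (n+1) := Fin.cons 0 u

lemma tailv_add {n : ℕ} (x y : Vv (n+1)) : tailv (x + y) = tailv x + tailv y := rfl

lemma zmod2_eq_zero_of_ne_one {a : ZMod 2} (h : a ≠ 1) : a = 0 := by revert h; revert a; decide

lemma not_contains101_of_convex {n : ℕ} (d : Vv (n+1))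
    (hconv : ∀ p q r : Fin (n+1), p < q → q < r → d p = 1 → d r = 1 → d q = 1) :
    ¬ contains101 (tailv d) := by
  rintro ⟨i, j, k, hij, hjk, hi, hj, hk⟩
  have h1 : i.succ < j.succ := Fin.succ_lt_succ_iff.mpr hij
  have h2 : j.succ < k.succ := Fin.succ_lt_succ_iff.mpr hjk
  have := hconv i.succ j.succ k.succ h1 h2 hi hk
  rw [show d j.succ = tailv d j from rfl, hj] at this
  exact z2_zero_ne_one this

lemma not_contains101_of_interval {n : ℕ} (d : Vv (n+1)) (a b : ℕ)
    (h : ∀ k : Fin (n+1), d k = 1 ↔ (a ≤ (k:ℕ) ∧ (k:ℕ) < b)) :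
    ¬ contains101 (tailv d) := by
  apply not_contains101_of_convex
  intro p q r hpq hqr hp hr
  rw [h] at hp hr ⊢
  have hpq' : (p:ℕ) < (q:ℕ) := hpq
  have hqr' : (q:ℕ) < (r:ℕ) := hqr
  omega

lemma interval_of_not_contains101 {n : ℕ} (d : Vv (n+1))
    (h0 : d 0 = 0) (hne : d ≠ 0) (h : ¬ contains101 (tailv d)) :
    ∃ a b : ℕ, 0 < a ∧ a < b ∧ b ≤ n+1 ∧
      ∀ k : Fin (n+1), d k = 1 ↔ (a ≤ (k:ℕ) ∧ (k:ℕ) < b) := by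
  classical
  set s : Finset (Fin (n+1)) := Finset.univ.filter (fun k => d k = 1) with hs
  have hsne : s.Nonempty := by
    by_contra hempty
    apply hne
    funext k
    have : k ∉ s := fun hk => hempty ⟨k, hk⟩
    simp only [hs, Finset.mem_filter, Finset.mem_univ, true_and] at this
    simpa using zmod2_eq_zero_of_ne_one this
  set A := s.min' hsne with hA
  set C := s.max' hsne with hC
  have hAmem : A ∈ s := s.min'_mem hsne
  have hCmem : C ∈ s := s.max'_mem hsne
  have hdA : d A = 1 := by
    have := hAmem; simp only [hs, Finset.mem_filter] at this; exact this.2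
  have hdC : d C = 1 := by
    have := hCmem; simp only [hs, Finset.mem_filter] at this; exact this.2
  have hApos : (0:ℕ) < (A:ℕ) := by
    rcases Nat.eq_zero_or_pos (A:ℕ) with hz | hp
    · exfalso
      have : A = 0 := Fin.ext hz
      rw [this, h0] at hdA
      exact z2_zero_ne_one hdA
    · exact hp
  have hcontig : ∀ k : Fin (n+1), (A:ℕ) ≤ (k:ℕ) → (k:ℕ) ≤ (C:ℕ) → d k = 1 := by
    intro k hak hkc
    by_contra hdk
    have hdk0 : d k = 0 := zmod2_eq_zero_of_ne_one hdk
    have hAk : (A:ℕ) < (k:ℕ) := by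
      rcases Nat.lt_or_ge (A:ℕ) (k:ℕ) with h' | h'
      · exact h'
      · exfalso; have : k = A := Fin.ext (by omega); rw [this, hdA] at hdk0
        exact z2_zero_ne_one hdk0.symm
    have hkC : (k:ℕ) < (C:ℕ) := by
      rcases Nat.lt_or_ge (k:ℕ) (C:ℕ) with h' | h'
      · exact h'
      · exfalso; have : k = C := Fin.ext (by omega); rw [this, hdC] at hdk0
        exact z2_zero_ne_one hdk0.symm
    apply h
    refine ⟨⟨(A:ℕ)-1, by omega⟩, ⟨(k:ℕ)-1, by omega⟩, ⟨(C:ℕ)-1, by omega⟩,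
      ?_, ?_, ?_, ?_, ?_⟩
    · show ((A:ℕ)-1) < ((k:ℕ)-1); omega
    · show ((k:ℕ)-1) < ((C:ℕ)-1); omega
    · show d (Fin.succ _) = 1
      have : Fin.succ (⟨(A:ℕ)-1, by omega⟩ : Fin n) = A := Fin.ext (by simp; omega)
      rw [this]; exact hdA
    · show d (Fin.succ _) = 0
      have : Fin.succ (⟨(k:ℕ)-1, by omega⟩ : Fin n) = k := Fin.ext (by simp; omega)
      rw [this]; exact hdk0
    · show d (Fin.succ _) = 1
      have : Fin.succ (⟨(C:ℕ)-1, by omega⟩ : Fin n) = C := Fin.ext (by simp; omega)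
      rw [this]; exact hdC
  have hAC : (A:ℕ) ≤ (C:ℕ) := s.min'_le C hCmem
  have hClt : (C:ℕ) < n+1 := C.isLt
  refine ⟨(A:ℕ), (C:ℕ)+1, hApos, by omega, by omega, ?_⟩
  intro k
  constructor
  · intro hk
    have hks : k ∈ s := by simp [hs, hk]
    exact ⟨s.min'_le k hks, by have := s.le_max' k hks; omega⟩
  · intro ⟨h1, h2⟩
    exact hcontig k h1 (by omega)

lemma z2_add_eq_zero_iff : ∀ a b : ZMod 2, a + b = 0 ↔ a = b := by decide
lemma z2_cases : ∀ a : ZMod 2, a = 0 ∨ a = 1 := by decide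
lemma z2_expand : ∀ p q : ZMod 2, q = p + (p + q) := by decide
lemma z2_state : ∀ (p e1 dk e2 : ZMod 2), dk = e1 + e2 → p + e1 = p + dk + e2 := by decide
lemma z2_state2 : ∀ (p dk e : ZMod 2), dk + 1 + e = 0 → p + dk + 1 + e = p := by decide
lemma z2_cancel1 : ∀ p q : ZMod 2, p + 1 = q + 1 → p = q := by decide

lemma good_pair_contains101 {n : ℕ} {f : Vv (n+1) → ZMod 2} {x x' : Vv (n+1)}
    (hx0 : x 0 = 0) (hx'0 : x' 0 = 0) (hne : x ≠ x')
    (hg : Good f x) (hg' : Good f x') :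
    contains101 (tailv (x + x')) := by
  by_contra hcon
  set d : Vv (n+1) := x + x' with hd
  have hd0 : d 0 = 0 := by simp [hd, Pi.add_apply, hx0, hx'0]
  have hdne : d ≠ 0 := by
    intro h
    apply hne
    funext k
    have := congrFun h k
    simp only [hd, Pi.add_apply, Pi.zero_apply] at this
    exact (z2_add_eq_zero_iff _ _).mp this
  obtain ⟨a, b, ha, hab, hb, hiff⟩ := interval_of_not_contains101 d hd0 hdne hcon
  have hdval : ∀ k : Fin (n+1), d k = if a ≤ (k:ℕ) ∧ (k:ℕ) < b then 1 else 0 := by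
    intro k
    by_cases hk : a ≤ (k:ℕ) ∧ (k:ℕ) < b
    · rw [if_pos hk]; exact (hiff k).mpr hk
    · rw [if_neg hk]
      rcases z2_cases (d k) with h | h
      · exact h
      · exact absurd ((hiff k).mp h) hk
  have hx'eq : ∀ k : Fin (n+1), x' k = x k + d k := by
    intro k
    simp only [hd, Pi.add_apply]
    exact z2_expand (x k) (x' k)
  rcases Nat.lt_or_ge b (n+1) with hbn | hbn
  · -- interior interval case
    set A : Fin (n+1) := ⟨a, by omega⟩ with hA
    set B : Fin (n+1) := ⟨b, hbn⟩ with hB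
    have hdd1 : ∀ k : Fin (n+1), d k = ee (n+1) a k + ee (n+1) b k := by
      intro k
      rw [hdval k]
      simp only [ee]
      by_cases h1 : (k:ℕ) < a <;> by_cases h2 : (k:ℕ) < b
      · rw [if_neg (by omega), if_pos h1, if_pos h2]; decide
      · exact absurd (h1.trans hab) h2
      · rw [if_pos (by omega : a ≤ (k:ℕ) ∧ (k:ℕ) < b), if_neg h1, if_pos h2]; decide
      · rw [if_neg (by omega), if_neg h1, if_neg h2]; decide
    have hstate1 : x + ee (n+1) a = x' + ee (n+1) b := by
      funext k
      simp only [Pi.add_apply]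
      rw [hx'eq k]
      exact z2_state (x k) _ _ _ (hdd1 k)
    have hstate2 : x + ee (n+1) b = x' + ee (n+1) a := by
      funext k
      simp only [Pi.add_apply]
      rw [hx'eq k]
      refine z2_state (x k) _ _ _ ?_
      rw [hdd1 k]; exact add_comm _ _
    have e1 := (hg A).1
    have e2 := (hg' B).1
    have e3 := (hg B).1
    have e4 := (hg' A).1
    rw [show ((A : Fin (n+1)):ℕ) = a from rfl, hstate1] at e1
    rw [show ((B : Fin (n+1)):ℕ) = b from rfl, hstate2] at e3
    rw [show ((B : Fin (n+1)):ℕ) = b from rfl] at e2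
    rw [show ((A : Fin (n+1)):ℕ) = a from rfl] at e4
    have q1 : x A = x' B := z2_cancel1 _ _ (e1.symm.trans e2)
    have q2 : x B = x' A := z2_cancel1 _ _ (e3.symm.trans e4)
    have hdB : d B = 0 := by
      rw [hdval B, if_neg]
      exact fun h => absurd h.2 (lt_irrefl b)
    have hdA : d A = 1 := by
      rw [hdval A, if_pos (⟨le_refl a, hab⟩ :
        a ≤ ((A : Fin (n+1)):ℕ) ∧ ((A : Fin (n+1)):ℕ) < b)]
    have hxB : x' B = x B := by rw [hx'eq B, hdB, add_zero]
    have hxA : x' A = x A + 1 := by rw [hx'eq A, hdA]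
    rw [hxB] at q1
    rw [hxA, ← q1] at q2
    exact z2_ne_add_one (x A) q2
  · -- b = n+1 case
    have hbeq : b = n+1 := by omega
    set A : Fin (n+1) := ⟨a, by omega⟩ with hA
    have hzero : ∀ k : Fin (n+1), d k + 1 + ee (n+1) a k = 0 := by
      intro k
      rw [hdval k]
      simp only [ee]
      have hkb : (k:ℕ) < b := by rw [hbeq]; exact k.isLt
      by_cases h1 : (k:ℕ) < a
      · rw [if_neg (by omega), if_pos h1]; decide
      · rw [if_pos (⟨by omega, hkb⟩ : a ≤ (k:ℕ) ∧ (k:ℕ) < b), if_neg h1]; decide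
    have hstate1 : cpl x' + ee (n+1) a = x := by
      funext k
      simp only [Pi.add_apply, cpl]
      rw [hx'eq k]
      exact z2_state2 (x k) _ _ (hzero k)
    have hstate2 : cpl x + ee (n+1) a = x' := by
      funext k
      simp only [Pi.add_apply, cpl]
      rw [hx'eq k]
      have := z2_state2 (x' k) _ _ (hzero k)
      rw [hx'eq k] at this
      -- this : x k + d k + d k + 1 + ee = x k + d k ; not directly; do decide style
      revert this
      generalize x k = p
      generalize d k = q
      generalize ee (n+1) a k = r
      revert p q r; decide
    have e1 := (hg 0).1
    have e2 := (hg' A).2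
    have e3 := (hg' 0).1
    have e4 := (hg A).2
    rw [show (((0:Fin (n+1))):ℕ) = 0 from rfl] at e1 e3
    rw [show ((A : Fin (n+1)):ℕ) = a from rfl] at e2 e4
    have hee0 : ee (n+1) 0 = 0 := by funext k; simp [ee]
    rw [hee0, add_zero, hx0] at e1
    rw [hee0, add_zero, hx'0] at e3
    rw [hstate1] at e2
    rw [hstate2] at e4
    have hx'A : x' A = 1 := by rw [← e2, e1]; decide
    have hxA : x A = 1 := by rw [← e4, e3]; decide
    have hdA : d A = 1 := by
      rw [hdval A, if_pos (⟨le_refl a, by omega⟩ :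
        a ≤ ((A : Fin (n+1)):ℕ) ∧ ((A : Fin (n+1)):ℕ) < b)]
    have := hx'eq A
    rw [hx'A, hxA, hdA] at this
    have hfin : (1:ZMod 2) = 0 := this.trans (by decide)
    exact z2_zero_ne_one hfin.symm

lemma liftv_zero {n : ℕ} (u : Vv n) : liftv u 0 = 0 := Fin.cons_zero _ _
lemma tailv_liftv {n : ℕ} (u : Vv n) : tailv (liftv u) = u := by
  funext k; show (Fin.cons 0 u : Vv (n+1)) k.succ = u k; exact Fin.cons_succ _ _ _
lemma liftv_injective {n : ℕ} : Function.Injective (liftv (n := n)) := by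
  intro u v h
  rw [← tailv_liftv u, ← tailv_liftv v, h]

lemma ee_inj {N : ℕ} (i j : Fin N) (h : ee N (i:ℕ) = ee N (j:ℕ)) : i = j := by
  by_contra hne
  rcases lt_trichotomy (i:ℕ) (j:ℕ) with hlt | heq | hlt
  · have := congrFun h i
    rw [show ee N (i:ℕ) i = 0 from by simp [ee],
      show ee N (j:ℕ) i = 1 from by simp [ee, hlt]] at this
    exact z2_zero_ne_one this
  · exact hne (Fin.ext heq)
  · have := congrFun h j
    rw [show ee N (i:ℕ) j = 1 from by simp [ee, hlt],
      show ee N (j:ℕ) j = 0 from by simp [ee]] at this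
    exact z2_zero_ne_one this.symm

lemma z2_rearr1 : ∀ p q e e' : ZMod 2, p + e = q + e' → p + q = e + e' := by decide
lemma z2_rearr2 : ∀ p q e e' : ZMod 2, p + e = q + 1 + e' → p + q = e + e' + 1 := by decide
lemma z2_cancel_left : ∀ p e e' : ZMod 2, p + e = p + e' → e = e' := by decide
lemma z2_cpl_cancel : ∀ p q e e' : ZMod 2, p + 1 + e = q + 1 + e' → p + e = q + e' := by decide

lemma tailv_add_lift {n : ℕ} (u u' : Vv n) :
    tailv (liftv u + liftv u') = u + u' := by
  funext k
  show (liftv u + liftv u') k.succ = u k + u' k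
  simp [Pi.add_apply, liftv, Fin.cons_succ]

/-- collisions between first-kind constraint states -/
lemma collide1 {n : ℕ} {S : Finset (Vv n)}
    (hS : ∀ u ∈ S, ∀ v ∈ S, u ≠ v → contains101 (u + v))
    {u u' : Vv n} (hu : u ∈ S) (hu' : u' ∈ S) (i i' : Fin (n+1))
    (heq : liftv u + ee (n+1) (i:ℕ) = liftv u' + ee (n+1) (i':ℕ)) : u = u' ∧ i = i' := by
  set d : Vv (n+1) := liftv u + liftv u' with hd
  have dval : ∀ k : Fin (n+1), d k =
      (if (k:ℕ) < (i:ℕ) then 1 else 0) + (if (k:ℕ) < (i':ℕ) then 1 else 0) := by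
    intro k
    have := congrFun heq k
    simp only [Pi.add_apply] at this
    exact z2_rearr1 _ _ _ _ this
  have huu' : u = u' := by
    by_contra hne
    apply not_contains101_of_convex d ?_ (by rw [tailv_add_lift]; exact hS u hu u' hu' hne)
    intro p q r hpq hqr hp hr
    have hpq' : (p:ℕ) < (q:ℕ) := hpq
    have hqr' : (q:ℕ) < (r:ℕ) := hqr
    rw [dval] at hp hr ⊢
    by_cases hqi : (q:ℕ) < (i:ℕ) <;> by_cases hqi' : (q:ℕ) < (i':ℕ)
    · rw [if_pos (by omega), if_pos (by omega)] at hp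
      exact absurd hp (by decide)
    · rw [if_pos hqi, if_neg hqi']; decide
    · rw [if_neg hqi, if_pos hqi']; decide
    · rw [if_neg (by omega), if_neg (by omega)] at hr
      exact absurd hr (by decide)
  refine ⟨huu', ee_inj i i' ?_⟩
  subst huu'
  funext k
  have := congrFun heq k
  simp only [Pi.add_apply] at this
  exact z2_cancel_left _ _ _ this

/-- cross collisions are impossible -/
lemma collide2 {n : ℕ} {S : Finset (Vv n)}
    (hS : ∀ u ∈ S, ∀ v ∈ S, u ≠ v → contains101 (u + v))
    {u u' : Vv n} (hu : u ∈ S) (hu' : u' ∈ S) (i i' : Fin (n+1))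
    (heq : liftv u + ee (n+1) (i:ℕ) = cpl (liftv u') + ee (n+1) (i':ℕ)) : False := by
  set d : Vv (n+1) := liftv u + liftv u' with hd
  have dval : ∀ k : Fin (n+1), d k =
      (if (k:ℕ) < (i:ℕ) then 1 else 0) + (if (k:ℕ) < (i':ℕ) then 1 else 0) + 1 := by
    intro k
    have := congrFun heq k
    simp only [Pi.add_apply, cpl] at this
    exact z2_rearr2 _ _ _ _ this
  by_cases huu' : u = u'
  · subst huu'
    have h1 := dval ⟨n, Nat.lt_succ_self n⟩
    have h2 : d ⟨n, Nat.lt_succ_self n⟩ = 0 := by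
      simp only [hd, Pi.add_apply]
      exact (z2_add_eq_zero_iff _ _).mpr rfl
    rw [h2, if_neg (by have := i.isLt; simp; omega), if_neg (by have := i'.isLt; simp; omega)] at h1
    exact absurd h1 (by decide)
  · have hd0 : d 0 = 0 := by
      simp only [hd, Pi.add_apply, liftv_zero, add_zero]
    have hc := hS u hu u' hu' huu'
    apply not_contains101_of_convex d ?_ (by rw [tailv_add_lift]; exact hc)
    have h0 := dval 0
    rw [hd0] at h0
    simp only [Fin.val_zero] at h0
    rcases Nat.eq_zero_or_pos (i:ℕ) with hi | hi <;> rcases Nat.eq_zero_or_pos (i':ℕ) with hi' | hi'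
    · have h0 := dval 0
      rw [hd0, if_neg (by rw [Fin.val_zero]; omega), if_neg (by rw [Fin.val_zero]; omega)] at h0
      exact absurd h0.symm (by decide)
    · intro p q r hpq hqr hp hr
      have hpq' : (p:ℕ) < (q:ℕ) := hpq
      have hqr' : (q:ℕ) < (r:ℕ) := hqr
      rw [dval] at hp ⊢
      have hpi' : ¬ (p:ℕ) < (i':ℕ) := by
        intro hcon2
        rw [if_neg (by omega), if_pos hcon2] at hp
        exact absurd hp (by decide)
      rw [if_neg (by omega), if_neg (by omega)]; decide
    · intro p q r hpq hqr hp hr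
      have hpq' : (p:ℕ) < (q:ℕ) := hpq
      have hqr' : (q:ℕ) < (r:ℕ) := hqr
      rw [dval] at hp ⊢
      have hpi : ¬ (p:ℕ) < (i:ℕ) := by
        intro hcon2
        rw [if_pos hcon2, if_neg (by omega)] at hp
        exact absurd hp (by decide)
      rw [if_neg (by omega), if_neg (by omega)]; decide
    · have h0 := dval 0
      rw [hd0, if_pos (by rw [Fin.val_zero]; omega), if_pos (by rw [Fin.val_zero]; omega)] at h0
      exact absurd h0.symm (by decide)

noncomputable def fS {n : ℕ} (S : Finset (Vv n)) : Vv (n+1) → ZMod 2 := fun v =>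
  if h : ∃ p : Vv n × Fin (n+1), p.1 ∈ S ∧ v = liftv p.1 + ee (n+1) ((p.2:ℕ)) then
    liftv h.choose.1 h.choose.2 + 1
  else if h2 : ∃ p : Vv n × Fin (n+1), p.1 ∈ S ∧ v = cpl (liftv p.1) + ee (n+1) ((p.2:ℕ)) then
    liftv h2.choose.1 h2.choose.2
  else 0

lemma Good_fS {n : ℕ} {S : Finset (Vv n)}
    (hS : ∀ u ∈ S, ∀ v ∈ S, u ≠ v → contains101 (u + v))
    {u : Vv n} (hu : u ∈ S) : Good (fS S) (liftv u) := by
  intro i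
  constructor
  · show fS S (liftv u + ee (n+1) (i:ℕ)) = liftv u i + 1
    unfold fS
    have hex : ∃ p : Vv n × Fin (n+1), p.1 ∈ S ∧
        liftv u + ee (n+1) (i:ℕ) = liftv p.1 + ee (n+1) ((p.2:ℕ)) := ⟨(u, i), hu, rfl⟩
    rw [dif_pos hex]
    obtain ⟨hmem, heq⟩ := hex.choose_spec
    obtain ⟨h1, h2⟩ := collide1 hS hu hmem i hex.choose.2 heq
    rw [← h1, ← h2]
  · show fS S (cpl (liftv u) + ee (n+1) (i:ℕ)) = liftv u i
    unfold fS
    have hnex : ¬ ∃ p : Vv n × Fin (n+1), p.1 ∈ S ∧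
        cpl (liftv u) + ee (n+1) (i:ℕ) = liftv p.1 + ee (n+1) ((p.2:ℕ)) := by
      rintro ⟨p, hp, hpe⟩
      exact collide2 hS hp hu p.2 i hpe.symm
    rw [dif_neg hnex]
    have hex : ∃ p : Vv n × Fin (n+1), p.1 ∈ S ∧
        cpl (liftv u) + ee (n+1) (i:ℕ) = cpl (liftv p.1) + ee (n+1) ((p.2:ℕ)) := ⟨(u, i), hu, rfl⟩
    rw [dif_pos hex]
    obtain ⟨hmem, heq⟩ := hex.choose_spec
    have heq' : liftv u + ee (n+1) (i:ℕ) = liftv hex.choose.1 + ee (n+1) ((hex.choose.2:ℕ)) := by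
      funext k
      have := congrFun heq k
      simp only [Pi.add_apply, cpl] at this ⊢
      exact z2_cpl_cancel _ _ _ _ this
    obtain ⟨h1, h2⟩ := collide1 hS hu hmem i hex.choose.2 heq'
    rw [← h1, ← h2]

lemma eta_ge_card {n : ℕ} {S : Finset (Vv n)}
    (hS : ∀ u ∈ S, ∀ v ∈ S, u ≠ v → contains101 (u + v)) :
    S.card ≤ numTwoCycles (fS S) := by
  rw [numTwoCycles_eq_ncard_Af]
  have hsub : liftv '' (S : Set (Vv n)) ⊆ Af (fS S) := by
    rintro _ ⟨u, hu, rfl⟩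
    exact ⟨liftv_zero u, Good_fS hS hu⟩
  calc S.card = (liftv '' (S : Set (Vv n))).ncard := by
        rw [Set.ncard_image_of_injective _ liftv_injective, Set.ncard_coe_finset]
    _ ≤ (Af (fS S)).ncard := Set.ncard_le_ncard hsub (Set.toFinite _)

lemma exists_code {n : ℕ} (f : Vv (n+1) → ZMod 2) :
    ∃ S : Finset (Vv n),
      (∀ u ∈ S, ∀ v ∈ S, u ≠ v → contains101 (u + v)) ∧ S.card = numTwoCycles f := by
  classical
  have hfin : (tailv '' Af f).Finite := Set.toFinite _
  refine ⟨hfin.toFinset, ?_, ?_⟩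
  · intro u hu v hv huv
    rw [Set.Finite.mem_toFinset] at hu hv
    obtain ⟨x, hx, rfl⟩ := hu
    obtain ⟨x', hx', rfl⟩ := hv
    have hxx' : x ≠ x' := fun h => huv (by rw [h])
    have := good_pair_contains101 hx.1 hx'.1 hxx' hx.2 hx'.2
    rwa [tailv_add] at this
  · rw [numTwoCycles_eq_ncard_Af, ← Set.ncard_eq_toFinset_card _ hfin]
    apply Set.ncard_image_of_injOn
    intro x hx x' hx' hxe
    funext k
    induction k using Fin.cases with
    | zero => rw [hx.1, hx'.1]
    | succ j => exact congrFun hxe j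

end Stmt15
theorem stmt15 (n : ℕ) (hn : 1 ≤ n) :
    ∃ m : ℕ,
      IsGreatest {k : ℕ | ∃ f : (Fin (n + 1) → ZMod 2) → ZMod 2,
        numTwoCycles f = k} m ∧
      IsGreatest {k : ℕ | ∃ S : Finset (Fin n → ZMod 2),
        (∀ u ∈ S, ∀ v ∈ S, u ≠ v → contains101 (u + v)) ∧ S.card = k} m := by
  classical
  set cs : Set ℕ := {k : ℕ | ∃ S : Finset (Fin n → ZMod 2),
    (∀ u ∈ S, ∀ v ∈ S, u ≠ v → contains101 (u + v)) ∧ S.card = k} with hcs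
  have hne : cs.Nonempty := ⟨0, ∅, by simp, rfl⟩
  have hbdd : BddAbove cs := by
    refine ⟨Fintype.card (Fin n → ZMod 2), ?_⟩
    rintro k ⟨S, _, rfl⟩
    exact Finset.card_le_univ S
  set m := sSup cs with hm
  have hmem : m ∈ cs := Nat.sSup_mem hne hbdd
  have hcode : IsGreatest cs m := ⟨hmem, fun k hk => le_csSup hbdd hk⟩
  refine ⟨m, ⟨?_, ?_⟩, hcode⟩
  · -- m is attained as a number of 2-cycles
    obtain ⟨S, hSvalid, hScard⟩ := hmem
    refine ⟨Stmt15.fS S, le_antisymm ?_ ?_⟩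
    · obtain ⟨S', hS'valid, hS'card⟩ := Stmt15.exists_code (Stmt15.fS S)
      rw [← hS'card]
      exact le_csSup hbdd ⟨S', hS'valid, rfl⟩
    · rw [← hScard]
      exact Stmt15.eta_ge_card hSvalid
  · -- m is an upper bound for numbers of 2-cycles
    rintro k ⟨f, rfl⟩
    obtain ⟨S', hS'valid, hS'card⟩ := Stmt15.exists_code f
    rw [← hS'card]
    exact le_csSup hbdd ⟨S', hS'valid, rfl⟩
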